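/- For n > 1, the sphere Sⁿ has the Phragmen–Brouwer Property. -/

import Mathlib

open Complex Metric Set

noncomputable section

namespace SpherePBP

lemma mem_slit_of_abs_one {z : ℂ} (h1 : ‖z‖ = 1) (h2 : z ≠ -1) :
    z ∈ Complex.slitPlane := by
  rw [Complex.mem_slitPlane_iff]
  by_contra h
  push_neg at h
  obtain ⟨hre, him⟩ := h
  have hz : z = (z.re : ℂ) := by
    apply Complex.ext <;> simp [him]
  rw [hz] at h1
  rw [Complex.norm_real, Real.norm_eq_abs] at h1
  have : z.re = -1 := by
    rcases abs_eq (by norm_num : (0:ℝ) ≤ 1) |>.mp h1 with h' | h'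
    · linarith
    · exact h'
  exact h2 (by rw [hz, this]; norm_num)

lemma exp_arg_of_abs_one {z : ℂ} (h1 : ‖z‖ = 1) :
    Complex.exp (z.arg * Complex.I) = z := by
  conv_rhs => rw [← Complex.norm_mul_exp_arg_mul_I z]
  rw [h1]
  simp

/-- Homotopy lifting by subdivision: if `F : ℝ × T → circle` is continuous and `F 0` is
constant, then `F 1` admits a continuous logarithm. -/
lemma lift_of_homotopy {T : Type*} [MetricSpace T] [CompactSpace T]
    (F : ℝ → T → ℂ) (hF : Continuous fun p : ℝ × T => F p.1 p.2)
    (habs : ∀ t x, ‖F t x‖ = 1)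
    (c0 : ℂ) (hc0 : ∀ x, F 0 x = c0) :
    ∃ g : T → ℝ, Continuous g ∧ ∀ x, F 1 x = Complex.exp (g x * Complex.I) := by
  have hne : ∀ t x, F t x ≠ 0 := by
    intro t x h
    have := habs t x
    rw [h] at this
    simp at this
  -- uniform continuity on [0,1] × univ
  have hK : IsCompact ((Icc (0:ℝ) 1) ×ˢ (univ : Set T)) :=
    isCompact_Icc.prod isCompact_univ
  have hUC := hK.uniformContinuousOn_of_continuous hF.continuousOn
  rw [Metric.uniformContinuousOn_iff] at hUC
  obtain ⟨δ, hδ, hd⟩ := hUC 2 (by norm_num)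
  obtain ⟨m', hm'⟩ := exists_nat_one_div_lt hδ
  set m : ℕ := m' + 1 with hm
  have hmpos : (0:ℝ) < m := by positivity
  have hstep : (1:ℝ)/m < δ := by exact_mod_cast hm'
  -- the ratios
  set r : ℕ → T → ℂ := fun j x => F ((j+1)/m) x / F (j/m) x with hr
  have hratio : ∀ j : ℕ, j < m → ∀ x : T, ‖r j x‖ = 1 ∧ r j x ≠ -1 := by
    intro j hj x
    have habs' : ‖r j x‖ = 1 := by
      rw [hr]; simp only [norm_div, habs]; norm_num
    refine ⟨habs', ?_⟩
    intro hneg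
    have h1 : ((j:ℝ)+1)/m ∈ Icc (0:ℝ) 1 := by
      constructor
      · positivity
      · rw [div_le_one hmpos]
        exact_mod_cast Nat.succ_le_of_lt hj
    have h2 : ((j:ℝ))/m ∈ Icc (0:ℝ) 1 := by
      constructor
      · positivity
      · rw [div_le_one hmpos]
        exact_mod_cast Nat.le_of_lt hj
    have hdist : dist ((((j:ℝ)+1)/m, x) : ℝ × T) (((j:ℝ)/m, x)) < δ := by
      rw [Prod.dist_eq]
      simp only [dist_self]
      rw [max_eq_left dist_nonneg]
      rw [Real.dist_eq]
      have : ((j:ℝ)+1)/m - (j:ℝ)/m = 1/m := by ring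
      rw [this, abs_of_pos (by positivity)]
      exact hstep
    have := hd _ ⟨h1, mem_univ x⟩ _ ⟨h2, mem_univ x⟩ hdist
    -- F ((j+1)/m) x = - F (j/m) x
    have heq : F (((j:ℝ)+1)/m) x = - F ((j:ℝ)/m) x := by
      have h0 := hne ((j:ℝ)/m) x
      have h3 : F (((j:ℝ)+1)/m) x / F ((j:ℝ)/m) x = -1 := hneg
      rw [div_eq_iff h0] at h3
      rw [h3]; ring
    rw [Complex.dist_eq, heq] at this
    have : ‖-F ((j:ℝ)/m) x - F ((j:ℝ)/m) x‖ < 2 := this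
    rw [show -F ((j:ℝ)/m) x - F ((j:ℝ)/m) x = -(2 * F ((j:ℝ)/m) x) by ring] at this
    rw [norm_neg, norm_mul, habs] at this
    simp at this
  -- the lift
  set g : T → ℝ := fun x => c0.arg + ∑ j ∈ Finset.range m, (r j x).arg with hg
  have hcont : Continuous g := by
    refine continuous_const.add (continuous_finset_sum _ fun j hj => ?_)
    have hjm : j < m := Finset.mem_range.mp hj
    rw [continuous_iff_continuousAt]
    intro x
    have hrc : ContinuousAt (r j) x := by
      apply ContinuousAt.div
      · exact ((hF.comp (continuous_const.prodMk continuous_id)).continuousAt)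
      · exact ((hF.comp (continuous_const.prodMk continuous_id)).continuousAt)
      · exact hne _ _
    exact (Complex.continuousAt_arg
      (mem_slit_of_abs_one (hratio j hjm x).1 (hratio j hjm x).2)).comp hrc
  refine ⟨g, hcont, ?_⟩
  intro x
  have key : ∀ k : ℕ, k ≤ m →
      Complex.exp ((c0.arg + ∑ j ∈ Finset.range k, (r j x).arg : ℝ) * Complex.I)
        = F ((k:ℝ)/m) x := by
    intro k hk
    induction k with
    | zero =>
        simp only [Finset.range_zero, Finset.sum_empty, add_zero, Nat.cast_zero, zero_div]
        rw [hc0 x]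
        exact exp_arg_of_abs_one (by rw [← hc0 x]; exact habs 0 x)
    | succ k ih =>
        have hk' : k ≤ m := Nat.le_of_succ_le hk
        have hkm : k < m := Nat.lt_of_succ_le hk
        rw [Finset.sum_range_succ]
        have : ((c0.arg + (∑ j ∈ Finset.range k, (r j x).arg + (r k x).arg) : ℝ) : ℂ)
            * Complex.I
            = ((c0.arg + ∑ j ∈ Finset.range k, (r j x).arg : ℝ) : ℂ) * Complex.I
              + ((r k x).arg : ℝ) * Complex.I := by
          push_cast
          ring
        rw [this, Complex.exp_add, ih hk', exp_arg_of_abs_one (hratio k hkm x).1]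
        rw [hr]
        rw [mul_div_cancel₀ _ (hne _ _)]
        norm_num
  have := key m le_rfl
  rw [div_self (ne_of_gt hmpos)] at this
  rw [← this]


/-! ### Sphere geometry -/

section Sphere

variable {n : ℕ}

local notation "Euc" => EuclideanSpace ℝ (Fin (n+1))
local notation "Sph" => Metric.sphere (0 : EuclideanSpace ℝ (Fin (n+1))) (1:ℝ)

lemma norm_coe_sph (x : ↥Sph) : ‖(x : Euc)‖ = 1 := by
  have := x.2
  rwa [mem_sphere_zero_iff_norm] at this

lemma norm_eq_of_sq_coords {v w : Euc} (h : ∀ i, (w i)^2 = (v i)^2) : ‖w‖ = ‖v‖ := by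
  rw [EuclideanSpace.norm_eq, EuclideanSpace.norm_eq]
  congr 1
  refine Finset.sum_congr rfl fun i _ => ?_
  rw [Real.norm_eq_abs, Real.norm_eq_abs, _root_.sq_abs, _root_.sq_abs]
  exact h i

lemma continuous_coord (i : Fin (n+1)) : Continuous (fun v : Euc => v i) :=
  (continuous_apply i).comp (PiLp.continuous_ofLp _ _)

lemma continuous_into_euc {α : Type*} [TopologicalSpace α] (f : α → Euc)
    (h : ∀ i, Continuous fun a => f a i) : Continuous f :=
  (PiLp.continuous_toLp 2 (fun _ : Fin (n+1) => ℝ)).comp (continuous_pi h)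

/-- coordinate-0 retraction onto a hemisphere -/
def ret (ε : ℝ) (v : Euc) : Euc := WithLp.toLp 2 (Function.update v 0 (ε * |v 0|))

lemma ret_apply (ε : ℝ) (v : Euc) (i : Fin (n+1)) :
    ret ε v i = if i = 0 then ε * |v 0| else v i := Function.update_apply v 0 _ i

lemma ret_norm {ε : ℝ} (hε : |ε| = 1) (v : Euc) : ‖ret ε v‖ = ‖v‖ := by
  refine norm_eq_of_sq_coords fun i => ?_
  rw [ret_apply]
  split
  · next h =>
      subst h
      rw [mul_pow, ← _root_.sq_abs ε, hε, _root_.sq_abs (v 0)]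
      norm_num
  · rfl

lemma continuous_ret (ε : ℝ) : Continuous (ret (n := n) ε) := by
  refine continuous_into_euc _ fun i => ?_
  simp only [ret_apply]
  rcases eq_or_ne i 0 with h | h
  · subst h
    simp only [if_pos rfl]
    exact continuous_const.mul (continuous_coord 0).abs
  · simp only [if_neg h]
    exact continuous_coord i

def retS (ε : ℝ) (hε : |ε| = 1) (x : ↥Sph) : ↥Sph :=
  ⟨ret ε x, by
    rw [mem_sphere_zero_iff_norm, ret_norm hε, norm_coe_sph]⟩

lemma poleMem {ε : ℝ} (hε : |ε| = 1) : EuclideanSpace.single (0 : Fin (n+1)) ε ∈ Sph := by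
  rw [mem_sphere_zero_iff_norm, EuclideanSpace.norm_single, Real.norm_eq_abs, hε]

/-- the vector used in the contraction of a hemisphere to a pole -/
def ctrV (ε : ℝ) (p : ℝ × ↥Sph) : Euc :=
  (1 - max 0 (min 1 p.1)) • (EuclideanSpace.single (0 : Fin (n+1)) ε)
    + (max 0 (min 1 p.1)) • (ret ε (p.2 : Euc))

lemma ctrV_ne_zero {ε : ℝ} (hε : |ε| = 1) (p : ℝ × ↥Sph) : ctrV ε p ≠ 0 := by
  have hεne : ε ≠ 0 := by
    intro h; rw [h] at hε; simp at hε
  set τ := max 0 (min 1 p.1) with hτ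
  have hτ0 : 0 ≤ τ := le_max_left _ _
  have hτ1 : τ ≤ 1 := by
    rw [hτ]
    rcases le_total (min 1 p.1) 0 with h | h
    · rw [max_eq_left h]; norm_num
    · rw [max_eq_right h]; exact min_le_left _ _
  rcases eq_or_lt_of_le hτ1 with h1 | h1
  · -- τ = 1 : v = ret ε x, of norm one
    intro h
    have : ctrV ε p = ret ε (p.2 : Euc) := by
      rw [ctrV, ← hτ, h1]
      simp
    rw [this] at h
    have := ret_norm hε (p.2 : Euc)
    rw [h, norm_zero, norm_coe_sph] at this
    norm_num at this
  · -- τ < 1 : coordinate 0 is nonzero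
    intro h
    have h0 : ctrV ε p 0 = ε * ((1 - τ) + τ * |(p.2 : Euc) 0|) := by
      rw [ctrV, ← hτ]
      have : ((1 - τ) • (EuclideanSpace.single (0 : Fin (n+1)) ε)
          + τ • (ret ε (p.2 : Euc))) 0
          = (1 - τ) * (EuclideanSpace.single (0 : Fin (n+1)) ε) 0
            + τ * (ret ε (p.2 : Euc)) 0 := rfl
      rw [this, EuclideanSpace.single_apply, if_pos rfl, ret_apply, if_pos rfl]
      ring
    have hpos : (0:ℝ) < (1 - τ) + τ * |(p.2 : Euc) 0| := by
      have : 0 ≤ τ * |(p.2 : Euc) 0| := mul_nonneg hτ0 (abs_nonneg _)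
      linarith
    have : ctrV ε p 0 = 0 := by rw [h]; rfl
    rw [h0] at this
    exact hεne (by
      rcases mul_eq_zero.mp this with h' | h'
      · exact h'
      · linarith)

lemma continuous_ctrV (ε : ℝ) : Continuous (ctrV (n := n) ε) := by
  have hτ : Continuous (fun p : ℝ × ↥Sph => max 0 (min 1 p.1)) :=
    continuous_const.max (continuous_const.min continuous_fst)
  have hret : Continuous (fun p : ℝ × ↥Sph => ret ε (p.2 : Euc)) :=
    (continuous_ret ε).comp (continuous_subtype_val.comp continuous_snd)
  exact ((continuous_const.sub hτ).smul continuous_const).add (hτ.smul hret)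


/-- contraction of hemisphere to pole, as a sphere-valued map -/
def ctr (ε : ℝ) (hε : |ε| = 1) (p : ℝ × ↥Sph) : ↥Sph :=
  ⟨‖ctrV ε p‖⁻¹ • ctrV ε p, by
    rw [mem_sphere_zero_iff_norm, norm_smul, norm_inv, norm_norm,
      inv_mul_cancel₀ (norm_ne_zero_iff.mpr (ctrV_ne_zero hε p))]⟩

lemma continuous_ctr {ε : ℝ} (hε : |ε| = 1) : Continuous (ctr (n := n) ε hε) := by
  apply Continuous.subtype_mk
  exact (((continuous_ctrV ε).norm).inv₀
    (fun p => norm_ne_zero_iff.mpr (ctrV_ne_zero hε p))).smul (continuous_ctrV ε)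

lemma ctr_zero {ε : ℝ} (hε : |ε| = 1) (x : ↥Sph) :
    ctr ε hε (0, x) = ⟨EuclideanSpace.single (0 : Fin (n+1)) ε, poleMem hε⟩ := by
  have hv : ctrV (n := n) ε (0, x) = EuclideanSpace.single (0 : Fin (n+1)) ε := by
    rw [ctrV]
    norm_num
  apply Subtype.ext
  show ‖ctrV ε (0, x)‖⁻¹ • ctrV ε (0, x) = _
  rw [hv, EuclideanSpace.norm_single, Real.norm_eq_abs, hε]
  norm_num

lemma ctr_one {ε : ℝ} (hε : |ε| = 1) (x : ↥Sph) :
    ctr ε hε (1, x) = retS ε hε x := by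
  have hv : ctrV (n := n) ε (1, x) = ret ε (x : Euc) := by
    rw [ctrV]
    norm_num
  apply Subtype.ext
  show ‖ctrV ε (1, x)‖⁻¹ • ctrV ε (1, x) = _
  rw [hv, ret_norm hε, norm_coe_sph]
  norm_num
  rfl

/-- any unit-circle valued map on the sphere has a continuous logarithm on each hemisphere,
via the retraction. -/
lemma hemi_lift (f : ↥Sph → ℂ) (hf : Continuous f) (habs : ∀ x, ‖f x‖ = 1)
    (ε : ℝ) (hε : |ε| = 1) :
    ∃ g : ↥Sph → ℝ, Continuous g ∧
      ∀ x, f (retS ε hε x) = Complex.exp (g x * Complex.I) := by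
  obtain ⟨g, hg, hlift⟩ := lift_of_homotopy (fun t x => f (ctr ε hε (t, x)))
    (hf.comp ((continuous_ctr hε).comp (continuous_fst.prodMk continuous_snd)))
    (fun t x => habs _) (f ⟨EuclideanSpace.single (0 : Fin (n+1)) ε, poleMem hε⟩)
    (fun x => by beta_reduce; rw [ctr_zero hε])
  refine ⟨g, hg, fun x => ?_⟩
  rw [← hlift x, ctr_one hε]


lemma norm_one_iff_sum {ι : Type*} [Fintype ι] (v : EuclideanSpace ℝ ι) :
    ‖v‖ = 1 ↔ ∑ i, ‖v i‖^2 = 1 := by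
  rw [EuclideanSpace.norm_eq, Real.sqrt_eq_one]

def consE (y : EuclideanSpace ℝ (Fin n)) : Euc :=
  (WithLp.equiv 2 _).symm (Fin.cons 0 ((WithLp.equiv 2 _) y))

lemma consE_zero (y : EuclideanSpace ℝ (Fin n)) : consE y 0 = 0 := by
  rw [consE, WithLp.equiv_symm_apply, PiLp.toLp_apply, Fin.cons_zero]

lemma consE_succ (y : EuclideanSpace ℝ (Fin n)) (i : Fin n) :
    consE y i.succ = y i := by
  rw [consE, WithLp.equiv_symm_apply, PiLp.toLp_apply, Fin.cons_succ]; rfl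

lemma consE_norm (y : EuclideanSpace ℝ (Fin n)) (hy : ‖y‖ = 1) : ‖consE y‖ = 1 := by
  rw [norm_one_iff_sum] at hy ⊢
  rw [Fin.sum_univ_succ, consE_zero]
  simp only [consE_succ]
  simpa using hy

lemma continuous_consE : Continuous (consE (n := n)) := by
  refine continuous_into_euc _ fun i => ?_
  refine Fin.cases ?_ ?_ i
  · simp only [consE_zero]
    exact continuous_const
  · intro j
    simp only [consE_succ]
    exact continuous_coord' j
  where continuous_coord' (j : Fin n) :
      Continuous (fun v : EuclideanSpace ℝ (Fin n) => v j) :=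
    (continuous_apply j).comp (PiLp.continuous_ofLp _ _)

lemma equator_conn (hn : 1 < n) : IsConnected {x : ↥Sph | (x : Euc) 0 = 0} := by
  have hrank : 1 < Module.rank ℝ (EuclideanSpace ℝ (Fin n)) := by
    rw [← Module.finrank_eq_rank ℝ (EuclideanSpace ℝ (Fin n)), finrank_euclideanSpace_fin]
    exact_mod_cast hn
  have hSL : IsConnected (Metric.sphere (0 : EuclideanSpace ℝ (Fin n)) (1:ℝ)) :=
    isConnected_sphere hrank 0 zero_le_one
  set ψ : ↥(Metric.sphere (0 : EuclideanSpace ℝ (Fin n)) (1:ℝ)) → ↥Sph :=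
    fun y => ⟨consE (y : EuclideanSpace ℝ (Fin n)), by
      rw [mem_sphere_zero_iff_norm]
      exact consE_norm _ (by
        have := y.2
        rwa [mem_sphere_zero_iff_norm] at this)⟩ with hψ
  have hψc : Continuous ψ :=
    Continuous.subtype_mk (continuous_consE.comp continuous_subtype_val) _
  have him : {x : ↥Sph | (x : Euc) 0 = 0} = range ψ := by
    ext x
    constructor
    · intro hx
      -- build the preimage
      set y : EuclideanSpace ℝ (Fin n) :=
        (WithLp.equiv 2 _).symm (fun i => (x : Euc) i.succ) with hy
      have hyi : ∀ i, y i = (x : Euc) i.succ := fun i => by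
        rw [hy, WithLp.equiv_symm_apply, PiLp.toLp_apply]
      have hynorm : ‖y‖ = 1 := by
        rw [norm_one_iff_sum]
        have hx1 := norm_coe_sph x
        rw [norm_one_iff_sum, Fin.sum_univ_succ, hx, norm_zero] at hx1
        simp only [hyi]
        simpa using hx1
      refine ⟨⟨y, by rwa [mem_sphere_zero_iff_norm]⟩, ?_⟩
      apply Subtype.ext
      show consE y = (x : Euc)
      have : ∀ i : Fin (n+1), consE y i = (x : Euc) i := by
        intro i
        refine Fin.cases ?_ ?_ i
        · rw [consE_zero, hx]
        · intro j
          rw [consE_succ, hyi]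
      exact congrArg (WithLp.toLp 2) (funext this)
    · rintro ⟨y, rfl⟩
      show consE _ 0 = 0
      exact consE_zero _
  rw [him, ← image_univ]
  refine ⟨⟨ψ ⟨hSL.nonempty.choose, hSL.nonempty.choose_spec⟩, mem_image_of_mem _ (mem_univ _)⟩, ?_⟩
  have : PreconnectedSpace ↥(Metric.sphere (0 : EuclideanSpace ℝ (Fin n)) (1:ℝ)) :=
    (Subtype.connectedSpace hSL).toPreconnectedSpace
  exact isPreconnected_univ.image ψ hψc.continuousOn


lemma retS_pos (x : ↥Sph) (h : 0 ≤ (x : Euc) 0) :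
    retS 1 (by norm_num) x = x := by
  apply Subtype.ext
  show ret 1 (x : Euc) = (x : Euc)
  rw [ret, one_mul, _root_.abs_of_nonneg h]
  exact congrArg (WithLp.toLp 2) (Function.update_eq_self _ _)

lemma retS_neg (x : ↥Sph) (h : (x : Euc) 0 ≤ 0) :
    retS (-1) (by norm_num) x = x := by
  apply Subtype.ext
  show ret (-1) (x : Euc) = (x : Euc)
  have : (-1 : ℝ) * |(x : Euc) 0| = (x : Euc) 0 := by
    rw [_root_.abs_of_nonpos h]; ring
  rw [ret, this]
  exact congrArg (WithLp.toLp 2) (Function.update_eq_self _ _)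

/-- integer-valued continuous functions are constant on preconnected sets -/
lemma const_of_int {T : Type*} [TopologicalSpace T] {s : Set T} (hs : IsPreconnected s)
    {d : T → ℝ} (hd : Continuous d) (hint : ∀ x ∈ s, ∃ k : ℤ, d x = k)
    {x y : T} (hx : x ∈ s) (hy : y ∈ s) : d x = d y := by
  have him : IsPreconnected (d '' s) := hs.image d hd.continuousOn
  have key : ∀ u ∈ s, ∀ v ∈ s, ¬ d u < d v := by
    intro u hu v hv hlt
    obtain ⟨ku, hku⟩ := hint u hu
    obtain ⟨kv, hkv⟩ := hint v hv
    have hklt : ku < kv := by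
      rw [hku, hkv] at hlt
      exact_mod_cast hlt
    have hz : ((ku : ℝ) + 1/2) ∈ Icc (d u) (d v) := by
      constructor
      · rw [hku]; norm_num
      · rw [hkv]
        have : (ku : ℝ) + 1 ≤ kv := by exact_mod_cast hklt
        linarith
    obtain ⟨w, hw, hdw⟩ := him.Icc_subset ⟨u, hu, rfl⟩ ⟨v, hv, rfl⟩ hz
    obtain ⟨kw, hkw⟩ := hint w hw
    rw [hkw] at hdw
    have : (2 * kw : ℤ) = 2 * ku + 1 := by
      have : (2 * kw : ℝ) = 2 * ku + 1 := by linarith [hdw]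
      exact_mod_cast this
    omega
  exact le_antisymm (not_lt.mp (key y hy x hx)) (not_lt.mp (key x hx y hy))

/-- Every unit-circle-valued continuous map on `Sⁿ`, `n ≥ 2`, has a continuous logarithm. -/
lemma sphere_lift (hn : 1 < n) (f : ↥Sph → ℂ) (hf : Continuous f)
    (habs : ∀ x, ‖f x‖ = 1) :
    ∃ g : ↥Sph → ℝ, Continuous g ∧ ∀ x, f x = Complex.exp (g x * Complex.I) := by
  obtain ⟨gp, hgp, hgpl⟩ := hemi_lift f hf habs 1 (by norm_num)
  obtain ⟨gm, hgm, hgml⟩ := hemi_lift f hf habs (-1) (by norm_num)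
  have hcoord : Continuous (fun x : ↥Sph => (x : Euc) 0) :=
    (continuous_coord 0).comp continuous_subtype_val
  -- difference is an integer multiple of 2π on the equator
  have hπ : (2 * Real.pi) ≠ 0 := by positivity
  have hint : ∀ x : ↥Sph, (x : Euc) 0 = 0 → ∃ k : ℤ, gp x - gm x = k * (2 * Real.pi) := by
    intro x hx
    have h1 : f x = Complex.exp (gp x * Complex.I) := by
      have := hgpl x
      rwa [retS_pos x (le_of_eq hx.symm)] at this
    have h2 : f x = Complex.exp (gm x * Complex.I) := by
      have := hgml x
      rwa [retS_neg x (le_of_eq hx)] at this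
    have := h1.symm.trans h2
    rw [Complex.exp_eq_exp_iff_exists_int] at this
    obtain ⟨k, hk⟩ := this
    refine ⟨k, ?_⟩
    have : ((gp x - gm x - k * (2 * Real.pi) : ℝ) : ℂ) * Complex.I = 0 := by
      push_cast
      linear_combination hk
    rcases mul_eq_zero.mp this with h | h
    · have := Complex.ofReal_eq_zero.mp h
      linarith
    · exact absurd h Complex.I_ne_zero
  set d : ↥Sph → ℝ := fun x => (gp x - gm x) / (2 * Real.pi) with hd
  have hdc : Continuous d := (hgp.sub hgm).div_const _
  have hdint : ∀ x ∈ {x : ↥Sph | (x : Euc) 0 = 0}, ∃ k : ℤ, d x = k := by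
    intro x hx
    obtain ⟨k, hk⟩ := hint x hx
    exact ⟨k, by rw [hd]; field_simp [hk]; linarith [hk]⟩
  have hEq := equator_conn hn
  obtain ⟨e0, he0⟩ := hEq.nonempty
  obtain ⟨k0, hk0⟩ := hdint e0 he0
  -- the glued logarithm
  set g : ↥Sph → ℝ := fun x =>
    if 0 ≤ (x : Euc) 0 then gp x else gm x + k0 * (2 * Real.pi) with hg
  have hfr : ∀ x : ↥Sph, x ∈ frontier {x : ↥Sph | 0 ≤ (x : Euc) 0} →
      gp x = gm x + k0 * (2 * Real.pi) := by
    intro x hx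
    have hcl : IsClosed {x : ↥Sph | 0 ≤ (x : Euc) 0} := isClosed_Ici.preimage hcoord
    have h1 : x ∈ {x : ↥Sph | 0 ≤ (x : Euc) 0} := by
      have := frontier_subset_closure (s := {x : ↥Sph | 0 ≤ (x : Euc) 0}) hx
      rwa [hcl.closure_eq] at this
    have h2 : (x : Euc) 0 ≤ 0 := by
      rw [frontier_eq_closure_inter_closure] at hx
      have hsub : closure {x : ↥Sph | 0 ≤ (x : Euc) 0}ᶜ ⊆ {x : ↥Sph | (x : Euc) 0 ≤ 0} := by
        apply closure_minimal
        · intro z hz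
          simp only [mem_compl_iff, mem_setOf_eq, not_le] at hz
          exact le_of_lt hz
        · exact isClosed_Iic.preimage hcoord
      exact hsub hx.2
    have hx0 : (x : Euc) 0 = 0 := le_antisymm h2 h1
    have hdx : d x = d e0 := const_of_int hEq.isPreconnected hdc hdint hx0 he0
    rw [hk0] at hdx
    have : gp x - gm x = k0 * (2 * Real.pi) := by
      have := hdx
      rw [hd] at this
      field_simp at this
      linarith
    linarith
  have hgc : Continuous g := Continuous.if hfr hgp (hgm.add continuous_const)
  refine ⟨g, hgc, fun x => ?_⟩
  rcases le_or_gt 0 ((x : Euc) 0) with h | h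
  · have hfx : f x = Complex.exp (gp x * Complex.I) := by
      have := hgpl x
      rwa [retS_pos x h] at this
    rw [hfx, hg]
    simp only [if_pos h]
  · have h' : (x : Euc) 0 ≤ 0 := le_of_lt h
    have hfx : f x = Complex.exp (gm x * Complex.I) := by
      have := hgml x
      rwa [retS_neg x h'] at this
    rw [hg]
    simp only [not_le.mpr h, if_false]
    show f x = Complex.exp (((gm x + (k0:ℝ) * (2 * Real.pi) : ℝ)) * Complex.I)
    have : ((gm x + k0 * (2 * Real.pi) : ℝ) : ℂ) * Complex.I
        = (gm x : ℂ) * Complex.I + (k0 : ℂ) * (2 * Real.pi * Complex.I) := by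
      push_cast
      ring
    rw [this, Complex.exp_add, Complex.exp_int_mul_two_pi_mul_I, mul_one, hfx]


lemma real_of_exp_eq {s t : ℝ}
    (h : Complex.exp (s * Complex.I) = Complex.exp (t * Complex.I)) :
    ∃ k : ℤ, s = t + k * (2 * Real.pi) := by
  rw [Complex.exp_eq_exp_iff_exists_int] at h
  obtain ⟨k, hk⟩ := h
  refine ⟨k, ?_⟩
  have h0 : ((s - t - k * (2 * Real.pi) : ℝ) : ℂ) * Complex.I = 0 := by
    push_cast
    linear_combination hk
  rcases mul_eq_zero.mp h0 with h' | h'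
  · have := Complex.ofReal_eq_zero.mp h'
    linarith
  · exact absurd h' Complex.I_ne_zero

lemma exp_int_two_pi (k : ℤ) :
    Complex.exp (((k * (2 * Real.pi) : ℝ) : ℂ) * Complex.I) = 1 := by
  rw [show (((k * (2 * Real.pi) : ℝ) : ℂ) * Complex.I) = (k : ℂ) * (2 * Real.pi * Complex.I) by
    push_cast; ring]
  exact Complex.exp_int_mul_two_pi_mul_I k

end Sphere

end SpherePBP

def PhragmenBrouwer (X : Type*) [TopologicalSpace X] : Prop :=
  ConnectedSpace X ∧
    ∀ D E : Set X, IsClosed D → IsClosed E → Disjoint D E →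
      ∀ a b : X, a ∉ D ∪ E → b ∉ D ∪ E →
        b ∈ connectedComponentIn Dᶜ a → b ∈ connectedComponentIn Eᶜ a →
          b ∈ connectedComponentIn (D ∪ E)ᶜ a

open SpherePBP Set Metric in
theorem sphere_pbp (n : ℕ) (hn : 1 < n) :
    PhragmenBrouwer (Metric.sphere (0 : EuclideanSpace ℝ (Fin (n + 1))) 1) := by
  classical
  haveI hCS : ConnectedSpace ↥(Metric.sphere (0 : EuclideanSpace ℝ (Fin (n + 1))) (1:ℝ)) := by
    refine Subtype.connectedSpace (isConnected_sphere ?_ 0 zero_le_one)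
    rw [← Module.finrank_eq_rank ℝ _, finrank_euclideanSpace_fin]
    exact_mod_cast (by omega : 1 < n + 1)
  haveI hLC : LocallyConnectedSpace
      ↥(Metric.sphere (0 : EuclideanSpace ℝ (Fin (n + 1))) (1:ℝ)) :=
    ChartedSpace.locallyConnectedSpace (EuclideanSpace ℝ (Fin n)) _
  refine ⟨hCS, ?_⟩
  intro D E hD hE hDE a b ha hb haD haE
  rcases D.eq_empty_or_nonempty with hDe | hDne
  · rw [hDe, Set.empty_union]
    exact haE
  rcases E.eq_empty_or_nonempty with hEe | hEne
  · rw [hEe, Set.union_empty]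
    exact haD
  by_contra hgoal
  have hπpos := Real.pi_pos
  -- the Urysohn-type function
  set θ : ↥(Metric.sphere (0 : EuclideanSpace ℝ (Fin (n + 1))) (1:ℝ)) → ℝ :=
    fun x => Real.pi * (infDist x D / (infDist x D + infDist x E)) with hθ
  have hden : ∀ x, 0 < infDist x D + infDist x E := by
    intro x
    have hnn1 : 0 ≤ infDist x D := infDist_nonneg
    have hnn2 : 0 ≤ infDist x E := infDist_nonneg
    rcases lt_or_eq_of_le (add_nonneg hnn1 hnn2) with h | h
    · exact h
    have h1 : infDist x D = 0 := by linarith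
    have h2 : infDist x E = 0 := by linarith
    have hxD : x ∈ D := (hD.mem_iff_infDist_zero hDne).mpr h1
    have hxE : x ∈ E := (hE.mem_iff_infDist_zero hEne).mpr h2
    exact absurd hxE (disjoint_left.mp hDE hxD)
  have hθc : Continuous θ :=
    continuous_const.mul ((continuous_infDist_pt D).div
      ((continuous_infDist_pt D).add (continuous_infDist_pt E)) fun x => (hden x).ne')
  have hθ0 : ∀ x, 0 ≤ θ x := fun x =>
    mul_nonneg hπpos.le (div_nonneg infDist_nonneg (hden x).le)
  have hθπ : ∀ x, θ x ≤ Real.pi := by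
    intro x
    simp only [hθ]
    have h1 : infDist x D / (infDist x D + infDist x E) ≤ 1 := by
      rw [div_le_one (hden x)]
      have hnn2 : 0 ≤ infDist x E := infDist_nonneg
      linarith
    nlinarith
  have hθD : ∀ x, x ∈ D → θ x = 0 := by
    intro x hx
    simp only [hθ]
    simp [infDist_zero_of_mem hx]
  have hθE : ∀ x, x ∈ E → θ x = Real.pi := by
    intro x hx
    simp only [hθ]
    rw [infDist_zero_of_mem hx, add_zero, div_self, mul_one]
    intro h
    have := hden x
    rw [infDist_zero_of_mem hx, add_zero] at this
    linarith
  have hθD' : ∀ x, x ∉ D → 0 < θ x := by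
    intro x hx
    have h1 : 0 < infDist x D := by
      rcases lt_or_eq_of_le (infDist_nonneg : 0 ≤ infDist x D) with h | h
      · exact h
      · exact absurd ((hD.mem_iff_infDist_zero hDne).mpr h.symm) hx
    exact mul_pos hπpos (div_pos h1 (hden x))
  have hθE' : ∀ x, x ∉ E → θ x < Real.pi := by
    intro x hx
    have h1 : 0 < infDist x E := by
      rcases lt_or_eq_of_le (infDist_nonneg : 0 ≤ infDist x E) with h | h
      · exact h
      · exact absurd ((hE.mem_iff_infDist_zero hEne).mpr h.symm) hx
    simp only [hθ]
    have h2 : infDist x D / (infDist x D + infDist x E) < 1 := by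
      rw [div_lt_one (hden x)]
      have hnn1 : 0 ≤ infDist x D := infDist_nonneg
      linarith
    nlinarith
  -- the component of b
  set W : Set ↥(Metric.sphere (0 : EuclideanSpace ℝ (Fin (n + 1))) (1:ℝ)) := (D ∪ E)ᶜ with hWdef
  have hWopen : IsOpen W := (hD.union hE).isOpen_compl
  set B := connectedComponentIn W b with hBdef
  have hbW : b ∈ W := hb
  have haW : a ∈ W := ha
  have hbB : b ∈ B := mem_connectedComponentIn hbW
  have haB : a ∉ B := by
    intro h
    exact hgoal (by
      rw [← connectedComponentIn_eq (x := b) h]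
      exact hbB)
  have hBopen : IsOpen B := hWopen.connectedComponentIn
  have hfront : ∀ x ∈ frontier B, x ∈ D ∪ E := by
    intro x hx
    rw [hBopen.frontier_eq] at hx
    obtain ⟨hxcl, hxB⟩ := hx
    by_contra hxDE
    have hxW : x ∈ W := hxDE
    have hxcomp : x ∈ connectedComponentIn W x := mem_connectedComponentIn hxW
    have hopen : IsOpen (connectedComponentIn W x) := hWopen.connectedComponentIn
    obtain ⟨y, hy1, hy2⟩ := _root_.mem_closure_iff.mp hxcl _ hopen hxcomp
    have e1 : connectedComponentIn W x = connectedComponentIn W y :=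
      connectedComponentIn_eq hy1
    have e2 : B = connectedComponentIn W y := connectedComponentIn_eq hy2
    rw [e2, ← e1] at hxB
    exact hxB hxcomp
  -- the circle-valued map
  set f : ↥(Metric.sphere (0 : EuclideanSpace ℝ (Fin (n + 1))) (1:ℝ)) → ℂ :=
    fun x => if x ∈ B then Complex.exp ((-θ x : ℝ) * Complex.I)
      else Complex.exp ((θ x : ℝ) * Complex.I) with hfdef
  have hfc : Continuous f := by
    refine Continuous.if ?_ ?_ ?_
    · intro x hx
      rw [Set.setOf_mem_eq] at hx
      rcases hfront x hx with hxD | hxE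
      · rw [hθD x hxD]
        norm_num
      · rw [hθE x hxE]
        rw [show ((-Real.pi : ℝ) : ℂ) * Complex.I = -(Real.pi * Complex.I) by push_cast; ring]
        rw [Complex.exp_neg, Complex.exp_pi_mul_I]
        norm_num
    · exact Complex.continuous_exp.comp ((Complex.continuous_ofReal.comp hθc.neg).mul
        continuous_const)
    · exact Complex.continuous_exp.comp ((Complex.continuous_ofReal.comp hθc).mul
        continuous_const)
  have hfabs : ∀ x, ‖f x‖ = 1 := by
    intro x
    simp only [hfdef]
    split <;> exact Complex.norm_exp_ofReal_mul_I _
  obtain ⟨g, hgc, hglift⟩ := sphere_lift hn f hfc hfabs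
  -- components avoiding D and E
  set P := connectedComponentIn Dᶜ a with hPdef
  set Q := connectedComponentIn Eᶜ a with hQdef
  have haP : a ∈ P := mem_connectedComponentIn (fun h => ha (Or.inl h))
  have haQ : a ∈ Q := mem_connectedComponentIn (fun h => ha (Or.inr h))
  have hbP : b ∈ P := haD
  have hbQ : b ∈ Q := haE
  have hPD : P ⊆ Dᶜ := connectedComponentIn_subset _ _
  have hQE : Q ⊆ Eᶜ := connectedComponentIn_subset _ _
  -- f avoids 1 on P and -1 on Q
  have hfP : ∀ x ∈ P, f x ≠ 1 := by
    intro x hx h1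
    have hxD : x ∉ D := hPD hx
    have hθpos := hθD' x hxD
    have hθle := hθπ x
    -- f x = exp(s I) with s = ±θ x
    have : ∃ s : ℝ, f x = Complex.exp ((s : ℝ) * Complex.I) ∧ 0 < |s| ∧ |s| ≤ Real.pi := by
      simp only [hfdef]
      split
      · exact ⟨-θ x, rfl, by rw [abs_neg, _root_.abs_of_pos hθpos]; exact ⟨hθpos, hθle⟩⟩
      · exact ⟨θ x, rfl, by rw [_root_.abs_of_pos hθpos]; exact ⟨hθpos, hθle⟩⟩
    obtain ⟨s, hs, hs0, hsπ⟩ := this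
    rw [hs] at h1
    have h2 : Complex.exp ((s : ℝ) * Complex.I) = Complex.exp ((0 : ℝ) * Complex.I) := by
      rw [h1]
      norm_num
    obtain ⟨k, hk⟩ := real_of_exp_eq h2
    rw [zero_add] at hk
    rcases eq_or_ne k 0 with hk0 | hk0
    · rw [hk0] at hk
      simp at hk
      rw [hk] at hs0
      simp at hs0
    · have : (1:ℝ) ≤ |(k:ℝ)| := by
        have : (1:ℤ) ≤ |k| := Int.one_le_abs hk0
        exact_mod_cast this
      have : 2 * Real.pi ≤ |s| := by
        rw [hk, abs_mul, abs_of_pos (by positivity : (0:ℝ) < 2 * Real.pi)]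
        nlinarith
      linarith
  have hfQ : ∀ x ∈ Q, f x ≠ -1 := by
    intro x hx h1
    have hxE : x ∉ E := hQE hx
    have hθlt := hθE' x hxE
    have hθge := hθ0 x
    have : ∃ s : ℝ, f x = Complex.exp ((s : ℝ) * Complex.I) ∧ -Real.pi < s ∧ s < Real.pi := by
      simp only [hfdef]
      split
      · exact ⟨-θ x, rfl, by linarith, by linarith⟩
      · exact ⟨θ x, rfl, by linarith, by linarith⟩
    obtain ⟨s, hs, hs1, hs2⟩ := this
    rw [hs] at h1
    have h2 : Complex.exp ((s : ℝ) * Complex.I) = Complex.exp ((Real.pi : ℝ) * Complex.I) := by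
      rw [h1, Complex.exp_pi_mul_I]
    obtain ⟨k, hk⟩ := real_of_exp_eq h2
    -- s = π + 2πk with -π < s < π
    have hkneg : (k : ℝ) < 0 := by nlinarith
    have hkgt : (-1 : ℝ) < (k : ℝ) := by nlinarith
    have h3 : (k : ℤ) < 0 := by exact_mod_cast hkneg
    have h4 : (-1 : ℤ) < k := by exact_mod_cast hkgt
    omega
  -- values of the lift at a and b
  have hfa : f a = Complex.exp ((θ a : ℝ) * Complex.I) := by
    simp only [hfdef]
    rw [if_neg haB]
  have hfb : f b = Complex.exp ((-θ b : ℝ) * Complex.I) := by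
    simp only [hfdef]
    rw [if_pos hbB]
  obtain ⟨k, hk⟩ := real_of_exp_eq ((hglift a).symm.trans hfa)
  obtain ⟨m, hm⟩ := real_of_exp_eq ((hglift b).symm.trans hfb)
  have hθa1 : 0 < θ a := hθD' a (fun h => ha (Or.inl h))
  have hθa2 : θ a < Real.pi := hθE' a (fun h => ha (Or.inr h))
  have hθb1 : 0 < θ b := hθD' b (fun h => hb (Or.inl h))
  have hθb2 : θ b < Real.pi := hθE' b (fun h => hb (Or.inr h))
  rcases le_or_gt m k with hmk | hkm
  · -- 2πk lies strictly between g b and g a : contradicts hfP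
    have hcast : (m : ℝ) ≤ k := by exact_mod_cast hmk
    have hz1 : g b < (k : ℝ) * (2 * Real.pi) := by nlinarith
    have hz2 : (k : ℝ) * (2 * Real.pi) < g a := by nlinarith
    have hPim : IsPreconnected (g '' P) :=
      isPreconnected_connectedComponentIn.image g hgc.continuousOn
    have hicc : Icc (g b) (g a) ⊆ g '' P :=
      hPim.Icc_subset (mem_image_of_mem g hbP) (mem_image_of_mem g haP)
    obtain ⟨x, hxP, hgx⟩ := hicc ⟨hz1.le, hz2.le⟩
    apply hfP x hxP
    rw [hglift x, hgx]
    exact exp_int_two_pi k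
  · -- π + 2πk lies strictly between g a and g b : contradicts hfQ
    have hcast : (k : ℝ) + 1 ≤ m := by exact_mod_cast hkm
    have hz1 : g a < Real.pi + (k : ℝ) * (2 * Real.pi) := by nlinarith
    have hz2 : Real.pi + (k : ℝ) * (2 * Real.pi) < g b := by nlinarith
    have hQim : IsPreconnected (g '' Q) :=
      isPreconnected_connectedComponentIn.image g hgc.continuousOn
    have hicc : Icc (g a) (g b) ⊆ g '' Q :=
      hQim.Icc_subset (mem_image_of_mem g haQ) (mem_image_of_mem g hbQ)
    obtain ⟨x, hxQ, hgx⟩ := hicc ⟨hz1.le, hz2.le⟩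
    apply hfQ x hxQ
    rw [hglift x, hgx]
    rw [show ((Real.pi + (k : ℝ) * (2 * Real.pi) : ℝ) : ℂ) * Complex.I
        = Real.pi * Complex.I + (k : ℂ) * (2 * Real.pi * Complex.I) by push_cast; ring]
    rw [Complex.exp_add, Complex.exp_pi_mul_I, Complex.exp_int_mul_two_pi_mul_I]
    ring
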